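/- Let n ≥ 1 and λ ∈ ℂⁿ. The Jordan–Pochhammer matrices satisfy the infinitesimal braid relations: (a) [J_{ij}(λ), J_{kl}(λ)] = 0 whenever {i,j} ∩ {k,l} = ∅; (b) [J_{ij}(λ), J_{ij}(λ) + J_{jk}(λ) + J_{ki}(λ)] = 0 whenever i, j, k are pairwise distinct. Here [A,B] = AB − BA denotes the commutator of matrices. -/
import Mathlib


/-- The Jordan–Pochhammer matrix `J_{ij}(λ)`: for `i ≠ j` its only nonzero entries are
the `(i,i)`-entry `λ j`, the `(i,j)`-entry `-λ j`, the `(j,i)`-entry `-λ i` and the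
`(j,j)`-entry `λ i`; and `J_{ii}(λ) = 0`.  This formula is symmetric in `i, j`, so
`J_{ij}(λ) = J_{ji}(λ)`. -/
def JP (n : ℕ) (lam : Fin n → ℂ) (i j : Fin n) : Matrix (Fin n) (Fin n) ℂ :=
  if i = j then 0 else
    Matrix.of fun a b =>
      if a = i ∧ b = i then lam j
      else if a = i ∧ b = j then - lam j
      else if a = j ∧ b = i then - lam i
      else if a = j ∧ b = j then lam i
      else 0

lemma JP_row_zero (n : ℕ) (lam : Fin n → ℂ) (i j a b : Fin n)
    (hai : a ≠ i) (haj : a ≠ j) : JP n lam i j a b = 0 := by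
  by_cases h : i = j
  · simp [JP, h]
  · simp [JP, h, hai, haj]

lemma JP_col_zero (n : ℕ) (lam : Fin n → ℂ) (i j a b : Fin n)
    (hbi : b ≠ i) (hbj : b ≠ j) : JP n lam i j a b = 0 := by
  by_cases h : i = j
  · simp [JP, h]
  · simp [JP, h, hbi, hbj]

lemma JP_mul_apply (n : ℕ) (lam : Fin n → ℂ) (i j : Fin n) (hij : i ≠ j)
    (M : Matrix (Fin n) (Fin n) ℂ) (a b : Fin n) :
    (JP n lam i j * M) a b = JP n lam i j a i * M i b + JP n lam i j a j * M j b := by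
  rw [Matrix.mul_apply]
  rw [show (Finset.univ : Finset (Fin n)).sum (fun c => JP n lam i j a c * M c b)
      = ({i, j} : Finset (Fin n)).sum (fun c => JP n lam i j a c * M c b) from
    (Finset.sum_subset (Finset.subset_univ _) (fun c _ hc => by
      simp only [Finset.mem_insert, Finset.mem_singleton, not_or] at hc
      rw [JP_col_zero n lam i j a c hc.1 hc.2, zero_mul])).symm]
  rw [Finset.sum_pair hij]

lemma mul_JP_apply (n : ℕ) (lam : Fin n → ℂ) (i j : Fin n) (hij : i ≠ j)
    (M : Matrix (Fin n) (Fin n) ℂ) (a b : Fin n) :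
    (M * JP n lam i j) a b = M a i * JP n lam i j i b + M a j * JP n lam i j j b := by
  rw [Matrix.mul_apply]
  rw [show (Finset.univ : Finset (Fin n)).sum (fun c => M a c * JP n lam i j c b)
      = ({i, j} : Finset (Fin n)).sum (fun c => M a c * JP n lam i j c b) from
    (Finset.sum_subset (Finset.subset_univ _) (fun c _ hc => by
      simp only [Finset.mem_insert, Finset.mem_singleton, not_or] at hc
      rw [JP_row_zero n lam i j c b hc.1 hc.2, mul_zero])).symm]
  rw [Finset.sum_pair hij]

/-- The Jordan–Pochhammer matrices satisfy the infinitesimal braid relations. -/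
theorem jordan_pochhammer_infinitesimal_braid_relations
    (n : ℕ) (hn : 1 ≤ n) (lam : Fin n → ℂ) :
    (∀ i j k l : Fin n, ({i, j} : Set (Fin n)) ∩ {k, l} = ∅ →
      JP n lam i j * JP n lam k l - JP n lam k l * JP n lam i j = 0) ∧
    (∀ i j k : Fin n, i ≠ j → j ≠ k → i ≠ k →
      JP n lam i j * (JP n lam i j + JP n lam j k + JP n lam k i) -
        (JP n lam i j + JP n lam j k + JP n lam k i) * JP n lam i j = 0) := by
  constructor
  · intro i j k l h
    rw [Set.eq_empty_iff_forall_notMem] at h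
    have hik : i ≠ k := by have := h i; simp at this; tauto
    have hil : i ≠ l := by have := h i; simp at this; tauto
    have hjk : j ≠ k := by have := h j; simp at this; tauto
    have hjl : j ≠ l := by have := h j; simp at this; tauto
    by_cases hij : i = j
    · simp [JP, hij]
    by_cases hkl : k = l
    · simp [JP, hkl]
    have h1 : JP n lam i j * JP n lam k l = 0 := by
      ext a b
      rw [JP_mul_apply n lam i j hij]
      rw [JP_row_zero n lam k l i b hik hil, JP_row_zero n lam k l j b hjk hjl]
      simp
    have h2 : JP n lam k l * JP n lam i j = 0 := by
      ext a b
      rw [JP_mul_apply n lam k l hkl]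
      rw [JP_row_zero n lam i j k b (Ne.symm hik) (Ne.symm hjk),
        JP_row_zero n lam i j l b (Ne.symm hil) (Ne.symm hjl)]
      simp
    rw [h1, h2, sub_zero]
  · intro i j k hij hjk hik
    ext a b
    rw [Matrix.sub_apply, JP_mul_apply n lam i j hij, mul_JP_apply n lam i j hij,
      Matrix.zero_apply]
    simp only [Matrix.add_apply]
    have hji : j ≠ i := Ne.symm hij
    have hkj : k ≠ j := Ne.symm hjk
    have hki : k ≠ i := Ne.symm hik
    simp only [JP, if_neg hij, if_neg hjk, if_neg (Ne.symm hik), Matrix.of_apply]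
    by_cases hai : a = i <;> by_cases haj : a = j <;> by_cases hak : a = k <;>
      by_cases hbi : b = i <;> by_cases hbj : b = j <;> by_cases hbk : b = k <;>
      simp_all <;> ring
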